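/- Let A and B be 4×4 real symmetric matrices defining ellipsoids, i.e., for M ∈ {A, B} the upper-left 3×3 block of M is positive definite and det M < 0; for such M let E_M = {x ∈ ℝ³ : (x,1)·M·(x,1)ᵀ ≤ 0} be the associated solid ellipsoid. Let f(λ) = det(λ·A + B). Then the ellipsoids touch each other externally (the open interiors {x : (x,1)·A·(x,1)ᵀ < 0} and {x : (x,1)·B·(x,1)ᵀ < 0} are disjoint and E_A ∩ E_B consists of exactly one point) if and only if f has a positive real root of multiplicity at least 2. -/

import Mathlib

/-- A 4×4 real symmetric matrix defines an ellipsoid when its upper-left 3×3 block is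
positive definite and its determinant is negative. -/
def IsEllipsoidMatrix (M : Matrix (Fin 4) (Fin 4) ℝ) : Prop :=
  M.IsSymm ∧ (Matrix.of fun i j : Fin 3 => M i.castSucc j.castSucc).PosDef ∧ M.det < 0

/-- The quadratic form `(x,1) · M · (x,1)ᵀ` associated to a 4×4 matrix `M`. -/
def ellipsoidQuadForm (M : Matrix (Fin 4) (Fin 4) ℝ) (x : Fin 3 → ℝ) : ℝ :=
  dotProduct ![x 0, x 1, x 2, 1] (M.mulVec ![x 0, x 1, x 2, 1])

/-- The characteristic polynomial `f(λ) = det (λ A + B)` of the pencil of `A` and `B`. -/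
noncomputable def pencilPoly (A B : Matrix (Fin 4) (Fin 4) ℝ) : Polynomial ℝ :=
  (Matrix.of fun i j =>
    Polynomial.C (A i j) * Polynomial.X + Polynomial.C (B i j)).det

namespace EllipsoidAux
open Matrix Polynomial

/-- upper-left 3×3 block -/
def blk (M : Matrix (Fin 4) (Fin 4) ℝ) : Matrix (Fin 3) (Fin 3) ℝ :=
  Matrix.of fun i j : Fin 3 => M i.castSucc j.castSucc

/-- the homogeneous vector (x, 1) -/
def hv (x : Fin 3 → ℝ) : Fin 4 → ℝ := ![x 0, x 1, x 2, 1]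

lemma hv_ne_zero (x : Fin 3 → ℝ) : hv x ≠ 0 := fun h => by
  have := congrFun h 3
  simp [hv] at this

lemma quad_hv (M : Matrix (Fin 4) (Fin 4) ℝ) (x : Fin 3 → ℝ) :
    ellipsoidQuadForm M x = dotProduct (hv x) (M.mulVec (hv x)) := rfl

theorem det_fin_four' {R : Type*} [CommRing R] (A : Matrix (Fin 4) (Fin 4) R) :
    A.det =
      A 0 0 * (A 1 1 * (A 2 2 * A 3 3 - A 2 3 * A 3 2) - A 1 2 * (A 2 1 * A 3 3 - A 2 3 * A 3 1)
        + A 1 3 * (A 2 1 * A 3 2 - A 2 2 * A 3 1))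
      - A 0 1 * (A 1 0 * (A 2 2 * A 3 3 - A 2 3 * A 3 2) - A 1 2 * (A 2 0 * A 3 3 - A 2 3 * A 3 0)
        + A 1 3 * (A 2 0 * A 3 2 - A 2 2 * A 3 0))
      + A 0 2 * (A 1 0 * (A 2 1 * A 3 3 - A 2 3 * A 3 1) - A 1 1 * (A 2 0 * A 3 3 - A 2 3 * A 3 0)
        + A 1 3 * (A 2 0 * A 3 1 - A 2 1 * A 3 0))
      - A 0 3 * (A 1 0 * (A 2 1 * A 3 2 - A 2 2 * A 3 1) - A 1 1 * (A 2 0 * A 3 2 - A 2 2 * A 3 0)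
        + A 1 2 * (A 2 0 * A 3 1 - A 2 1 * A 3 0)) := by
  rw [Matrix.det_succ_row_zero]
  simp (config := { decide := true }) [Fin.sum_univ_four, Matrix.det_fin_three, Fin.succAbove,
    Matrix.submatrix, show (Fin.succ 2 : Fin 4) = 3 from rfl,
    show (Fin.castSucc (2:Fin 3) : Fin 4) = 2 from rfl]
  ring

lemma blk_det (M : Matrix (Fin 4) (Fin 4) ℝ) :
    (blk M).det = M 0 0 * (M 1 1 * M 2 2 - M 1 2 * M 2 1) - M 0 1 * (M 1 0 * M 2 2 - M 1 2 * M 2 0)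
      + M 0 2 * (M 1 0 * M 2 1 - M 1 1 * M 2 0) := by
  rw [Matrix.det_fin_three]
  simp [blk, show (Fin.castSucc (0:Fin 3) : Fin 4) = 0 from rfl,
    show (Fin.castSucc (1:Fin 3) : Fin 4) = 1 from rfl,
    show (Fin.castSucc (2:Fin 3) : Fin 4) = 2 from rfl]
  ring

lemma symm_entries (M : Matrix (Fin 4) (Fin 4) ℝ) (hs : M.IsSymm) (i j : Fin 4) :
    M i j = M j i := by
  have := congrFun (congrFun hs j) i
  simpa [Matrix.transpose_apply] using this

lemma det_eq_block_mul (M : Matrix (Fin 4) (Fin 4) ℝ) (x0 : Fin 3 → ℝ) (t : ℝ)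
    (hveq : M.mulVec (hv x0) = ![0,0,0,t]) :
    M.det = (blk M).det * t := by
  have h0 := congrFun hveq 0
  have h1 := congrFun hveq 1
  have h2 := congrFun hveq 2
  have h3 := congrFun hveq 3
  simp [hv, Matrix.mulVec, dotProduct, Fin.sum_univ_four] at h0 h1 h2 h3
  have e0 : M 0 3 = -(M 0 0 * x0 0 + M 0 1 * x0 1 + M 0 2 * x0 2) := by linarith
  have e1 : M 1 3 = -(M 1 0 * x0 0 + M 1 1 * x0 1 + M 1 2 * x0 2) := by linarith
  have e2 : M 2 3 = -(M 2 0 * x0 0 + M 2 1 * x0 1 + M 2 2 * x0 2) := by linarith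
  have e3 : M 3 3 = t - (M 3 0 * x0 0 + M 3 1 * x0 1 + M 3 2 * x0 2) := by linarith
  rw [det_fin_four', blk_det, e0, e1, e2, e3]
  ring

lemma quadForm_expand (M : Matrix (Fin 4) (Fin 4) ℝ) (x : Fin 3 → ℝ) :
    ellipsoidQuadForm M x =
      M 0 0 * x 0 * x 0 + M 0 1 * x 0 * x 1 + M 0 2 * x 0 * x 2 + M 0 3 * x 0
      + M 1 0 * x 1 * x 0 + M 1 1 * x 1 * x 1 + M 1 2 * x 1 * x 2 + M 1 3 * x 1
      + M 2 0 * x 2 * x 0 + M 2 1 * x 2 * x 1 + M 2 2 * x 2 * x 2 + M 2 3 * x 2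
      + M 3 0 * x 0 + M 3 1 * x 1 + M 3 2 * x 2 + M 3 3 := by
  simp [ellipsoidQuadForm, Matrix.mulVec, dotProduct, Fin.sum_univ_four]
  ring

lemma pencil_coeff_one (A M : Matrix (Fin 4) (Fin 4) ℝ) (x0 : Fin 3 → ℝ)
    (hs : M.IsSymm) (hveq : M.mulVec (hv x0) = 0) :
    ((Matrix.of fun i j => C (A i j) * X + C (M i j)).det).coeff 1 =
      ellipsoidQuadForm A x0 * (blk M).det := by
  have hMT : Mᵀ.mulVec (hv x0) = 0 := by rw [hs]; exact hveq
  have h0 := congrFun hveq 0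
  have h1 := congrFun hveq 1
  have h2 := congrFun hveq 2
  have h3 := congrFun hveq 3
  have g0 := congrFun hMT 0
  have g1 := congrFun hMT 1
  have g2 := congrFun hMT 2
  simp [hv, Matrix.mulVec, dotProduct, Fin.sum_univ_four,
    Matrix.transpose_apply] at h0 h1 h2 h3 g0 g1 g2
  have f0 : M 3 0 = -(M 0 0 * x0 0 + M 1 0 * x0 1 + M 2 0 * x0 2) := by linarith
  have f1 : M 3 1 = -(M 0 1 * x0 0 + M 1 1 * x0 1 + M 2 1 * x0 2) := by linarith
  have f2 : M 3 2 = -(M 0 2 * x0 0 + M 1 2 * x0 1 + M 2 2 * x0 2) := by linarith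
  have e3 : M 3 3 = -(M 3 0 * x0 0 + M 3 1 * x0 1 + M 3 2 * x0 2) := by linarith
  have e0 : M 0 3 = -(M 0 0 * x0 0 + M 0 1 * x0 1 + M 0 2 * x0 2) := by linarith
  have e1 : M 1 3 = -(M 1 0 * x0 0 + M 1 1 * x0 1 + M 1 2 * x0 2) := by linarith
  have e2 : M 2 3 = -(M 2 0 * x0 0 + M 2 1 * x0 1 + M 2 2 * x0 2) := by linarith
  have key : ((Matrix.of fun i j => C (A i j) * X + C (M i j)).det).coeff 1 =
      (((Matrix.of fun i j => C (A i j) * X + C (M i j)).det).derivative).eval 0 := by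
    rw [← Polynomial.coeff_zero_eq_eval_zero]
    simp [Polynomial.coeff_derivative]
  rw [key, det_fin_four']
  simp only [Matrix.of_apply, Polynomial.derivative_add, Polynomial.derivative_sub,
    Polynomial.derivative_mul, Polynomial.derivative_C, Polynomial.derivative_X,
    Polynomial.eval_add, Polynomial.eval_sub, Polynomial.eval_mul, Polynomial.eval_C,
    Polynomial.eval_X, Polynomial.eval_zero, Polynomial.eval_one]
  rw [quadForm_expand, blk_det, e3, f0, f1, f2, e0, e1, e2]
  ring

lemma pencil_eval (A B : Matrix (Fin 4) (Fin 4) ℝ) (r : ℝ) :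
    (pencilPoly A B).eval r = (r • A + B).det := by
  have h := (Polynomial.evalRingHom r).map_det
    (Matrix.of fun i j => Polynomial.C (A i j) * Polynomial.X + Polynomial.C (B i j))
  have h2 : ((Matrix.of fun i j => Polynomial.C (A i j) * Polynomial.X + Polynomial.C (B i j)).map
      (Polynomial.evalRingHom r)) = r • A + B := by
    ext i j
    simp only [Matrix.map_apply, Matrix.of_apply, Polynomial.coe_evalRingHom, Polynomial.eval_add,
      Polynomial.eval_mul, Polynomial.eval_C, Polynomial.eval_X, Matrix.add_apply,
      Matrix.smul_apply, smul_eq_mul, _root_.map_add, _root_.map_mul]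
    ring
  rw [pencilPoly]
  show (Polynomial.evalRingHom r)
    ((Matrix.of fun i j => Polynomial.C (A i j) * Polynomial.X + Polynomial.C (B i j)).det) = _
  rw [h, RingHom.mapMatrix_apply, h2]

lemma pencil_coeff_zero (A M : Matrix (Fin 4) (Fin 4) ℝ) :
    ((Matrix.of fun i j => C (A i j) * X + C (M i j)).det).coeff 0 = M.det := by
  rw [Polynomial.coeff_zero_eq_eval_zero]
  have := pencil_eval A M 0
  rw [pencilPoly] at this
  simpa using this

lemma pencil_comp (A B : Matrix (Fin 4) (Fin 4) ℝ) (lam : ℝ) :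
    pencilPoly A B =
      ((Matrix.of fun i j => C (A i j) * X + C ((lam • A + B) i j)).det).comp (X - C lam) := by
  have h := (Polynomial.compRingHom (X - C lam)).map_det
    (Matrix.of fun i j => C (A i j) * X + C ((lam • A + B) i j))
  rw [Polynomial.coe_compRingHom_apply, RingHom.mapMatrix_apply] at h
  rw [h, pencilPoly]
  congr 1
  ext i j
  simp only [Matrix.map_apply, Matrix.of_apply, Polynomial.coe_compRingHom_apply,
    Polynomial.add_comp, Polynomial.mul_comp, Polynomial.C_comp, Polynomial.X_comp,
    Matrix.add_apply, Matrix.smul_apply, smul_eq_mul, Polynomial.C_add, Polynomial.C_mul]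
  ring

lemma comp_shift_dvd (p : Polynomial ℝ) (lam : ℝ) :
    (X - C lam) ^ 2 ∣ p.comp (X - C lam) ↔ (X : Polynomial ℝ) ^ 2 ∣ p := by
  constructor
  · rintro ⟨q, hq⟩
    have h1 : p = (p.comp (X - C lam)).comp (X + C lam) := by
      rw [Polynomial.comp_assoc]
      simp
    rw [h1, hq]
    refine ⟨q.comp (X + C lam), ?_⟩
    rw [Polynomial.mul_comp, Polynomial.pow_comp, Polynomial.sub_comp]
    simp
  · rintro ⟨q, hq⟩
    rw [hq]
    refine ⟨q.comp (X - C lam), ?_⟩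
    rw [Polynomial.mul_comp, Polynomial.pow_comp]
    simp

lemma mult_iff (A B : Matrix (Fin 4) (Fin 4) ℝ) (lam : ℝ) (hne : pencilPoly A B ≠ 0) :
    (2 ≤ (pencilPoly A B).rootMultiplicity lam) ↔
      (((Matrix.of fun i j => C (A i j) * X + C ((lam • A + B) i j)).det).coeff 0 = 0 ∧
       ((Matrix.of fun i j => C (A i j) * X + C ((lam • A + B) i j)).det).coeff 1 = 0) := by
  rw [Polynomial.le_rootMultiplicity_iff hne, pencil_comp A B lam, comp_shift_dvd,
    Polynomial.X_pow_dvd_iff]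
  constructor
  · intro h
    exact ⟨h 0 (by norm_num), h 1 (by norm_num)⟩
  · rintro ⟨c0, c1⟩ d hd
    interval_cases d
    · exact c0
    · exact c1


lemma dot_self_pos (a : Fin 3 → ℝ) (ha : a ≠ 0) : 0 < dotProduct a a := by
  obtain ⟨i, hi⟩ := Function.ne_iff.mp ha
  simp only [Pi.zero_apply] at hi
  exact Finset.sum_pos' (fun j _ => mul_self_nonneg (a j))
    ⟨i, Finset.mem_univ i, mul_self_pos.mpr hi⟩

lemma dot_expand (u w : Fin 3 → ℝ) :
    dotProduct u w = u 0 * w 0 + u 1 * w 1 + u 2 * w 2 := by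
  simp [dotProduct, Fin.sum_univ_three]

lemma exists_both_neg (a b : Fin 3 → ℝ) (ha : a ≠ 0) (hb : b ≠ 0)
    (h : ¬ ∃ lam : ℝ, 0 < lam ∧ b = -(lam • a)) :
    ∃ w : Fin 3 → ℝ, dotProduct a w < 0 ∧ dotProduct b w < 0 := by
  have haa0 : 0 < dotProduct a a := dot_self_pos a ha
  have hbb0 : 0 < dotProduct b b := dot_self_pos b hb
  by_cases hr : (fun i => dotProduct a a * b i - dotProduct a b * a i) = 0
  · -- proportional case : b = (ab/aa) • a
    have hbc : ∀ i, b i = (dotProduct a b / dotProduct a a) * a i := by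
      intro i
      have h1 := congrFun hr i
      simp only [Pi.zero_apply] at h1
      have haane : dotProduct a a ≠ 0 := ne_of_gt haa0
      rw [div_mul_eq_mul_div, eq_div_iff haane]
      linarith
    have hcne : dotProduct a b ≠ 0 := by
      intro h0
      apply hb
      ext i
      rw [hbc i, h0]
      simp
    rcases lt_or_gt_of_ne hcne with hneg | hpos
    · exfalso
      apply h
      refine ⟨-(dotProduct a b / dotProduct a a), ?_, ?_⟩
      · have : dotProduct a b / dotProduct a a < 0 := div_neg_of_neg_of_pos hneg haa0
        linarith
      · ext i
        rw [hbc i]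
        simp only [Pi.neg_apply, Pi.smul_apply, smul_eq_mul]
        ring
    · refine ⟨-a, ?_, ?_⟩
      · rw [dot_expand] at haa0 ⊢
        simp only [Pi.neg_apply]
        nlinarith
      · have hc : 0 < dotProduct a b / dotProduct a a := div_pos hpos haa0
        rw [dot_expand]
        simp only [Pi.neg_apply]
        rw [hbc 0, hbc 1, hbc 2]
        rw [dot_expand] at haa0
        nlinarith
  · -- strict Cauchy-Schwarz case
    have hrr : 0 < dotProduct
        (fun i => dotProduct a a * b i - dotProduct a b * a i)
        (fun i => dotProduct a a * b i - dotProduct a b * a i) :=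
      dot_self_pos _ hr
    have hlag : dotProduct a b ^ 2 <
        dotProduct a a * dotProduct b b := by
      have hid : dotProduct
          (fun i => dotProduct a a * b i - dotProduct a b * a i)
          (fun i => dotProduct a a * b i - dotProduct a b * a i)
          = dotProduct a a *
            (dotProduct a a * dotProduct b b - dotProduct a b ^ 2) := by
        simp only [dot_expand]
        ring
      rw [hid] at hrr
      nlinarith
    set sa := Real.sqrt (dotProduct a a) with hsa
    set sb := Real.sqrt (dotProduct b b) with hsb
    have hsa0 : 0 < sa := Real.sqrt_pos.mpr haa0
    have hsb0 : 0 < sb := Real.sqrt_pos.mpr hbb0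
    have hsa2 : sa ^ 2 = dotProduct a a := Real.sq_sqrt (le_of_lt haa0)
    have hsb2 : sb ^ 2 = dotProduct b b := Real.sq_sqrt (le_of_lt hbb0)
    have hfac : 0 < (sa * sb - dotProduct a b) * (sa * sb + dotProduct a b) := by
      nlinarith [hlag, hsa2, hsb2]
    have hkey : 0 < sa * sb + dotProduct a b := by
      nlinarith [hfac, mul_pos hsa0 hsb0]
    refine ⟨fun i => -(sb * a i + sa * b i), ?_, ?_⟩
    · have hda : dotProduct a (fun i => -(sb * a i + sa * b i))
          = -(sb * dotProduct a a + sa * dotProduct a b) := by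
        simp only [dot_expand]
        ring
      rw [hda]
      nlinarith [mul_pos hsa0 hkey, hsa2]
    · have hdb : dotProduct b (fun i => -(sb * a i + sa * b i))
          = -(sb * dotProduct a b + sa * dotProduct b b) := by
        simp only [dot_expand]
        ring
      rw [hdb]
      nlinarith [mul_pos hsb0 hkey, hsb2]


lemma quad_decomp (M : Matrix (Fin 4) (Fin 4) ℝ) (x0 : Fin 3 → ℝ) (t : ℝ) (hs : M.IsSymm)
    (hv : M.mulVec ![x0 0, x0 1, x0 2, 1] = ![0,0,0,t]) (x : Fin 3 → ℝ) :
    ellipsoidQuadForm M x =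
      dotProduct (fun i => x i - x0 i) ((blk M).mulVec (fun i => x i - x0 i)) + t := by
  have h0 := congrFun hv 0
  have h1 := congrFun hv 1
  have h2 := congrFun hv 2
  have h3 := congrFun hv 3
  simp [Matrix.mulVec, dotProduct, Fin.sum_univ_four] at h0 h1 h2 h3
  have s01 := symm_entries M hs 0 1
  have s02 := symm_entries M hs 0 2
  have s03 := symm_entries M hs 0 3
  have s12 := symm_entries M hs 1 2
  have s13 := symm_entries M hs 1 3
  have s23 := symm_entries M hs 2 3
  simp only [ellipsoidQuadForm, blk, Matrix.mulVec, dotProduct, Fin.sum_univ_four,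
    Fin.sum_univ_three, Matrix.of_apply, Matrix.cons_val_zero, Matrix.cons_val_one,
    Matrix.head_cons, Matrix.cons_val_two, Matrix.tail_cons, Matrix.cons_val_three,
    show (Fin.castSucc (0:Fin 3) : Fin 4) = 0 from rfl,
    show (Fin.castSucc (1:Fin 3) : Fin 4) = 1 from rfl,
    show (Fin.castSucc (2:Fin 3) : Fin 4) = 2 from rfl]
  have e0 : M 0 3 = -(M 0 0 * x0 0 + M 0 1 * x0 1 + M 0 2 * x0 2) := by linarith
  have e1 : M 1 3 = -(M 1 0 * x0 0 + M 1 1 * x0 1 + M 1 2 * x0 2) := by linarith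
  have e2 : M 2 3 = -(M 2 0 * x0 0 + M 2 1 * x0 1 + M 2 2 * x0 2) := by linarith
  have e33 : M 3 3 = t - (M 3 0 * x0 0 + M 3 1 * x0 1 + M 3 2 * x0 2) := by linarith
  have s30 : M 3 0 = M 0 3 := (symm_entries M hs 0 3).symm
  have s31 : M 3 1 = M 1 3 := (symm_entries M hs 1 3).symm
  have s32 : M 3 2 = M 2 3 := (symm_entries M hs 2 3).symm
  have s10 : M 1 0 = M 0 1 := (symm_entries M hs 0 1).symm
  have s20 : M 2 0 = M 0 2 := (symm_entries M hs 0 2).symm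
  have s21 : M 2 1 = M 1 2 := (symm_entries M hs 1 2).symm
  rw [e33, s30, s31, s32, e0, e1, e2, s10, s20, s21]
  ring


lemma posdef_smul {P : Matrix (Fin 3) (Fin 3) ℝ} (hP : P.PosDef) {c : ℝ} (hc : 0 < c) :
    (c • P).PosDef := by
  refine Matrix.PosDef.of_dotProduct_mulVec_pos ?_ ?_
  · show (c • P)ᴴ = c • P
    rw [Matrix.conjTranspose_smul, hP.1]
    simp
  · intro x hx
    have := hP.dotProduct_mulVec_pos hx
    rw [Matrix.smul_mulVec, dotProduct_smul]
    exact smul_pos hc this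

lemma posdef_dot_pos {P : Matrix (Fin 3) (Fin 3) ℝ} (hP : P.PosDef) {y : Fin 3 → ℝ}
    (hy : y ≠ 0) : 0 < dotProduct y (P.mulVec y) := by
  have := hP.dotProduct_mulVec_pos hy
  simpa using this

lemma posdef_dot_nonneg {P : Matrix (Fin 3) (Fin 3) ℝ} (hP : P.PosDef) (y : Fin 3 → ℝ) :
    0 ≤ dotProduct y (P.mulVec y) := by
  by_cases hy : y = 0
  · simp [hy]
  · exact le_of_lt (posdef_dot_pos hP hy)

lemma mulVec_block (M : Matrix (Fin 4) (Fin 4) ℝ) (x : Fin 3 → ℝ) (i : Fin 3) :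
    (M.mulVec (hv x)) i.castSucc = ((blk M).mulVec x) i + M i.castSucc 3 := by
  fin_cases i <;>
    simp [hv, blk, Matrix.mulVec, dotProduct, Fin.sum_univ_four, Fin.sum_univ_three,
      show (Fin.castSucc (0:Fin 3) : Fin 4) = 0 from rfl,
      show (Fin.castSucc (1:Fin 3) : Fin 4) = 1 from rfl,
      show (Fin.castSucc (2:Fin 3) : Fin 4) = 2 from rfl] <;> ring

lemma quad_linear (A B : Matrix (Fin 4) (Fin 4) ℝ) (lam : ℝ) (x : Fin 3 → ℝ) :
    ellipsoidQuadForm (lam • A + B) x =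
      lam * ellipsoidQuadForm A x + ellipsoidQuadForm B x := by
  simp only [ellipsoidQuadForm, Matrix.add_mulVec, Matrix.smul_mulVec,
    dotProduct_add, dotProduct_smul, smul_eq_mul]

lemma quad_eq_dot (A : Matrix (Fin 4) (Fin 4) ℝ) (x : Fin 3 → ℝ) :
    ellipsoidQuadForm A x = x 0 * (A.mulVec (hv x)) 0 + x 1 * (A.mulVec (hv x)) 1
      + x 2 * (A.mulVec (hv x)) 2 + (A.mulVec (hv x)) 3 := by
  simp [ellipsoidQuadForm, hv, dotProduct, Fin.sum_univ_four]

/-- the spatial gradient (half of it) of the quadratic form at `x` -/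
def gr (A : Matrix (Fin 4) (Fin 4) ℝ) (x : Fin 3 → ℝ) : Fin 3 → ℝ :=
  fun i => (A.mulVec (hv x)) i.castSucc

lemma gr_zero (A : Matrix (Fin 4) (Fin 4) ℝ) (x : Fin 3 → ℝ)
    (hg : gr A x = 0) (hq : ellipsoidQuadForm A x = 0) : A.mulVec (hv x) = 0 := by
  have h0 : (A.mulVec (hv x)) 0 = 0 := congrFun hg 0
  have h1 : (A.mulVec (hv x)) 1 = 0 := congrFun hg 1
  have h2 : (A.mulVec (hv x)) 2 = 0 := congrFun hg 2
  have h3 := quad_eq_dot A x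
  rw [hq, h0, h1, h2] at h3
  funext j
  fin_cases j
  · exact h0
  · exact h1
  · exact h2
  · show (A.mulVec (hv x)) 3 = 0
    linarith

lemma gr_ne_zero (A : Matrix (Fin 4) (Fin 4) ℝ) (x : Fin 3 → ℝ)
    (hdet : A.det ≠ 0) (hq : ellipsoidQuadForm A x = 0) : gr A x ≠ 0 := by
  intro hg
  apply hdet
  rw [← Matrix.exists_mulVec_eq_zero_iff]
  exact ⟨hv x, hv_ne_zero x, gr_zero A x hg hq⟩

-- epsilon lemmas
lemma eps_bound1 (p q s : ℝ) (hp : p < 0) (hs : 0 < s) (hb : s * (|q| + 1) ≤ -p) :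
    2*s*p + s^2*q < 0 := by
  have h1 : s * q ≤ s * |q| := by
    have := le_abs_self q
    nlinarith
  nlinarith [mul_pos hs hs, abs_nonneg q]

lemma eps_bound2 (c u r s : ℝ) (hc : c < 0) (hs : 0 < s) (hs1 : s ≤ 1)
    (hb : s * (2*|u| + |r| + 1) ≤ -c) : c + 2*s*u + s^2*r < 0 := by
  have h1 : s * u ≤ s * |u| := by
    have := le_abs_self u
    nlinarith
  have h3 : s * r ≤ s * |r| := by
    have := le_abs_self r
    nlinarith
  have h2 : s^2 * r ≤ s * |r| := by
    nlinarith [mul_le_mul_of_nonneg_left h3 (le_of_lt hs), abs_nonneg r,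
      mul_nonneg (mul_nonneg (sub_nonneg.mpr hs1) (le_of_lt hs)) (abs_nonneg r)]
  nlinarith

lemma eps_both (p q p' q' : ℝ) (hp : p < 0) (hp' : p' < 0) :
    ∃ s : ℝ, 0 < s ∧ 2*s*p + s^2*q < 0 ∧ 2*s*p' + s^2*q' < 0 := by
  have d1 : (0:ℝ) < |q| + 1 := by positivity
  have d2 : (0:ℝ) < |q'| + 1 := by positivity
  have n1 : 0 < -p := by linarith
  have n2 : 0 < -p' := by linarith
  have t1 : 0 < (-p)/(|q|+1) := div_pos n1 d1
  have t2 : 0 < (-p')/(|q'|+1) := div_pos n2 d2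
  have hs : 0 < min ((-p)/(|q|+1)) ((-p')/(|q'|+1)) := lt_min t1 t2
  refine ⟨min ((-p)/(|q|+1)) ((-p')/(|q'|+1)), hs, ?_, ?_⟩
  · apply eps_bound1 _ _ _ hp hs
    rw [← le_div_iff₀ d1]
    exact min_le_left _ _
  · apply eps_bound1 _ _ _ hp' hs
    rw [← le_div_iff₀ d2]
    exact min_le_right _ _

lemma eps_mixed (p q c u r : ℝ) (hp : p < 0) (hc : c < 0) :
    ∃ s : ℝ, 0 < s ∧ 2*s*p + s^2*q < 0 ∧ c + 2*s*u + s^2*r < 0 := by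
  have d1 : (0:ℝ) < |q| + 1 := by positivity
  have d2 : (0:ℝ) < 2*|u| + |r| + 1 := by positivity
  have n1 : 0 < -p := by linarith
  have n2 : 0 < -c := by linarith
  have t1 : 0 < (-p)/(|q|+1) := div_pos n1 d1
  have t2 : 0 < (-c)/(2*|u|+|r|+1) := div_pos n2 d2
  have hs : 0 < min (min 1 ((-p)/(|q|+1))) ((-c)/(2*|u|+|r|+1)) :=
    lt_min (lt_min one_pos t1) t2
  refine ⟨min (min 1 ((-p)/(|q|+1))) ((-c)/(2*|u|+|r|+1)), hs, ?_, ?_⟩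
  · apply eps_bound1 _ _ _ hp hs
    rw [← le_div_iff₀ d1]
    exact le_trans (min_le_left _ _) (min_le_right _ _)
  · apply eps_bound2 _ _ _ _ hc hs
    · exact le_trans (min_le_left _ _) (min_le_left _ _)
    · rw [← le_div_iff₀ d2]
      exact min_le_right _ _


lemma quad_shift (A : Matrix (Fin 4) (Fin 4) ℝ) (hs : A.IsSymm) (x0 w : Fin 3 → ℝ) (s : ℝ) :
    ellipsoidQuadForm A (fun i => x0 i + s * w i) =
      ellipsoidQuadForm A x0
      + 2 * s * (w 0 * gr A x0 0 + w 1 * gr A x0 1 + w 2 * gr A x0 2)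
      + s^2 * dotProduct w ((blk A).mulVec w) := by
  have s10 : A 1 0 = A 0 1 := (symm_entries A hs 0 1).symm
  have s20 : A 2 0 = A 0 2 := (symm_entries A hs 0 2).symm
  have s21 : A 2 1 = A 1 2 := (symm_entries A hs 1 2).symm
  have s30 : A 3 0 = A 0 3 := (symm_entries A hs 0 3).symm
  have s31 : A 3 1 = A 1 3 := (symm_entries A hs 1 3).symm
  have s32 : A 3 2 = A 2 3 := (symm_entries A hs 2 3).symm
  simp only [ellipsoidQuadForm, gr, hv, blk, Matrix.mulVec, dotProduct, Fin.sum_univ_four,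
    Fin.sum_univ_three, Matrix.of_apply, Matrix.cons_val_zero, Matrix.cons_val_one,
    Matrix.head_cons, Matrix.cons_val_two, Matrix.tail_cons, Matrix.cons_val_three,
    show (Fin.castSucc (0:Fin 3) : Fin 4) = 0 from rfl,
    show (Fin.castSucc (1:Fin 3) : Fin 4) = 1 from rfl,
    show (Fin.castSucc (2:Fin 3) : Fin 4) = 2 from rfl]
  rw [s10, s20, s21, s30, s31, s32]
  ring

lemma push_inside (A B : Matrix (Fin 4) (Fin 4) ℝ) (hAs : A.IsSymm) (hBs : B.IsSymm)
    (hAdet : A.det ≠ 0) (x0 : Fin 3 → ℝ)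
    (hQA : ellipsoidQuadForm A x0 = 0) (hQB : ellipsoidQuadForm B x0 < 0) :
    ∃ x : Fin 3 → ℝ, ellipsoidQuadForm A x < 0 ∧ ellipsoidQuadForm B x < 0 := by
  have hg : gr A x0 ≠ 0 := gr_ne_zero A x0 hAdet hQA
  obtain ⟨w, hwdef⟩ : ∃ w : Fin 3 → ℝ, w = fun i => -(gr A x0 i) := ⟨_, rfl⟩
  have hw0 : w 0 = -(gr A x0 0) := by rw [hwdef]
  have hw1 : w 1 = -(gr A x0 1) := by rw [hwdef]
  have hw2 : w 2 = -(gr A x0 2) := by rw [hwdef]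
  have hL : w 0 * gr A x0 0 + w 1 * gr A x0 1 + w 2 * gr A x0 2 < 0 := by
    have h1 := dot_self_pos (gr A x0) hg
    rw [dot_expand] at h1
    rw [hw0, hw1, hw2]
    nlinarith
  obtain ⟨s, hs, h1, h2⟩ := eps_mixed
    (w 0 * gr A x0 0 + w 1 * gr A x0 1 + w 2 * gr A x0 2)
    (dotProduct w ((blk A).mulVec w))
    (ellipsoidQuadForm B x0)
    (w 0 * gr B x0 0 + w 1 * gr B x0 1 + w 2 * gr B x0 2)
    (dotProduct w ((blk B).mulVec w))
    hL hQB
  refine ⟨fun i => x0 i + s * w i, ?_, ?_⟩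
  · rw [quad_shift A hAs x0 w s, hQA]
    linarith
  · rw [quad_shift B hBs x0 w s]
    linarith

lemma pencil_ne_zero (A B : Matrix (Fin 4) (Fin 4) ℝ) (hBdet : B.det < 0) :
    pencilPoly A B ≠ 0 := by
  intro h
  have h0 := pencil_eval A B 0
  rw [h] at h0
  rw [zero_smul, zero_add] at h0
  simp only [Polynomial.eval_zero] at h0
  exact absurd h0.symm (ne_of_lt hBdet)

lemma symm_add_smul (A B : Matrix (Fin 4) (Fin 4) ℝ) (hAs : A.IsSymm) (hBs : B.IsSymm)
    (lam : ℝ) : (lam • A + B).IsSymm := by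
  rw [Matrix.IsSymm] at hAs hBs ⊢
  rw [Matrix.transpose_add, Matrix.transpose_smul, hAs, hBs]

lemma backward (A B : Matrix (Fin 4) (Fin 4) ℝ) (hA : IsEllipsoidMatrix A)
    (hB : IsEllipsoidMatrix B) (lam : ℝ) (hlam : 0 < lam)
    (heval : (pencilPoly A B).eval lam = 0)
    (hmult : 2 ≤ (pencilPoly A B).rootMultiplicity lam) :
    (¬ ∃ x : Fin 3 → ℝ, ellipsoidQuadForm A x < 0 ∧ ellipsoidQuadForm B x < 0) ∧
      (∃! x : Fin 3 → ℝ, ellipsoidQuadForm A x ≤ 0 ∧ ellipsoidQuadForm B x ≤ 0) := by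
  obtain ⟨hAs, hAP, hAdet⟩ := hA
  obtain ⟨hBs, hBP, hBdet⟩ := hB
  have hMs : (lam • A + B).IsSymm := symm_add_smul A B hAs hBs lam
  have hblk : blk (lam • A + B) = lam • blk A + blk B := by
    ext i j
    simp [blk]
  have hPD : (blk (lam • A + B)).PosDef := by
    rw [hblk]
    exact (posdef_smul hAP hlam).add hBP
  have hdetP : 0 < (blk (lam • A + B)).det := hPD.det_pos
  have hdetM : (lam • A + B).det = 0 := by rw [← pencil_eval]; exact heval
  have hPunit : IsUnit (blk (lam • A + B)).det := isUnit_iff_ne_zero.mpr (ne_of_gt hdetP)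
  set q : Fin 3 → ℝ := fun i => (lam • A + B) i.castSucc 3 with hq
  set x0 : Fin 3 → ℝ := -((blk (lam • A + B))⁻¹.mulVec q) with hx0
  have hPx0 : (blk (lam • A + B)).mulVec x0 = -q := by
    rw [hx0, Matrix.mulVec_neg, Matrix.mulVec_mulVec, Matrix.mul_nonsing_inv _ hPunit,
      Matrix.one_mulVec]
  have hfirst : ∀ i : Fin 3, ((lam • A + B).mulVec (hv x0)) i.castSucc = 0 := by
    intro i
    rw [mulVec_block]
    have h1 := congrFun hPx0 i
    rw [h1]
    simp only [Pi.neg_apply, hq, Matrix.add_apply, Matrix.smul_apply, smul_eq_mul]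
    ring
  have hveq : (lam • A + B).mulVec (hv x0) =
      ![0, 0, 0, ((lam • A + B).mulVec (hv x0)) 3] := by
    funext j
    fin_cases j
    · simpa using hfirst 0
    · simpa using hfirst 1
    · simpa using hfirst 2
    · rfl
  have ht0 : ((lam • A + B).mulVec (hv x0)) 3 = 0 := by
    have hD := det_eq_block_mul (lam • A + B) x0 _ hveq
    rw [hdetM] at hD
    exact (mul_eq_zero.mp hD.symm).resolve_left (ne_of_gt hdetP)
  rw [ht0] at hveq
  have hv0 : (lam • A + B).mulVec (hv x0) = 0 := by
    rw [hveq]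
    funext j
    fin_cases j <;> rfl
  have hquadM : ∀ x, ellipsoidQuadForm (lam • A + B) x =
      dotProduct (fun i => x i - x0 i)
        ((blk (lam • A + B)).mulVec (fun i => x i - x0 i)) := by
    intro x
    have h1 := quad_decomp (lam • A + B) x0 0 hMs hveq x
    simpa using h1
  have hMnonneg : ∀ x, 0 ≤ ellipsoidQuadForm (lam • A + B) x := fun x => by
    rw [hquadM x]
    exact posdef_dot_nonneg hPD _
  have hdisj : ¬ ∃ x : Fin 3 → ℝ, ellipsoidQuadForm A x < 0 ∧ ellipsoidQuadForm B x < 0 := by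
    rintro ⟨x, hax, hbx⟩
    have h1 := hMnonneg x
    rw [quad_linear] at h1
    nlinarith
  have hne : pencilPoly A B ≠ 0 := pencil_ne_zero A B hBdet
  have hc1 := ((mult_iff A B lam hne).mp hmult).2
  rw [pencil_coeff_one A (lam • A + B) x0 hMs hv0] at hc1
  have hQA0 : ellipsoidQuadForm A x0 = 0 :=
    (mul_eq_zero.mp hc1).resolve_right (ne_of_gt hdetP)
  have hquadM0 : ellipsoidQuadForm (lam • A + B) x0 = 0 := by
    rw [quad_hv, hv0, dotProduct_zero]
  have hQB0 : ellipsoidQuadForm B x0 = 0 := by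
    have h1 := hquadM0
    rw [quad_linear, hQA0] at h1
    linarith
  refine ⟨hdisj, ⟨x0, ⟨le_of_eq hQA0, le_of_eq hQB0⟩, ?_⟩⟩
  rintro y ⟨hya, hyb⟩
  have h1 : ellipsoidQuadForm (lam • A + B) y ≤ 0 := by
    rw [quad_linear]
    nlinarith
  have h2 : ellipsoidQuadForm (lam • A + B) y = 0 := le_antisymm h1 (hMnonneg y)
  rw [hquadM y] at h2
  have hzz : (fun i => y i - x0 i) = 0 := by
    by_contra hne2
    exact absurd h2 (ne_of_gt (posdef_dot_pos hPD hne2))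
  funext i
  have h3 := congrFun hzz i
  simp only [Pi.zero_apply] at h3
  linarith

lemma forward (A B : Matrix (Fin 4) (Fin 4) ℝ) (hA : IsEllipsoidMatrix A)
    (hB : IsEllipsoidMatrix B)
    (hdisj : ¬ ∃ x : Fin 3 → ℝ, ellipsoidQuadForm A x < 0 ∧ ellipsoidQuadForm B x < 0)
    (hex : ∃ x : Fin 3 → ℝ, ellipsoidQuadForm A x ≤ 0 ∧ ellipsoidQuadForm B x ≤ 0) :
    ∃ lam : ℝ, 0 < lam ∧ (pencilPoly A B).eval lam = 0 ∧
      2 ≤ (pencilPoly A B).rootMultiplicity lam := by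
  obtain ⟨hAs, hAP, hAdet⟩ := hA
  obtain ⟨hBs, hBP, hBdet⟩ := hB
  obtain ⟨x0, hax0, hbx0⟩ := hex
  have hQ0 : ellipsoidQuadForm A x0 = 0 ∧ ellipsoidQuadForm B x0 = 0 := by
    rcases lt_or_eq_of_le hax0 with ha | ha
    · rcases lt_or_eq_of_le hbx0 with hb | hb
      · exact absurd ⟨x0, ha, hb⟩ hdisj
      · obtain ⟨x, hx1, hx2⟩ := push_inside B A hBs hAs (ne_of_lt hBdet) x0 hb ha
        exact absurd ⟨x, hx2, hx1⟩ hdisj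
    · rcases lt_or_eq_of_le hbx0 with hb | hb
      · obtain ⟨x, hx1, hx2⟩ := push_inside A B hAs hBs (ne_of_lt hAdet) x0 ha hb
        exact absurd ⟨x, hx1, hx2⟩ hdisj
      · exact ⟨ha, hb⟩
  obtain ⟨hQA0, hQB0⟩ := hQ0
  have hgA : gr A x0 ≠ 0 := gr_ne_zero A x0 (ne_of_lt hAdet) hQA0
  have hgB : gr B x0 ≠ 0 := gr_ne_zero B x0 (ne_of_lt hBdet) hQB0
  have hpar : ∃ lam : ℝ, 0 < lam ∧ gr B x0 = -(lam • gr A x0) := by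
    by_contra hno
    obtain ⟨w, hwa, hwb⟩ := exists_both_neg (gr A x0) (gr B x0) hgA hgB hno
    rw [dot_expand] at hwa hwb
    have hLa : w 0 * gr A x0 0 + w 1 * gr A x0 1 + w 2 * gr A x0 2 < 0 := by linarith
    have hLb : w 0 * gr B x0 0 + w 1 * gr B x0 1 + w 2 * gr B x0 2 < 0 := by linarith
    obtain ⟨s, hs, h1, h2⟩ := eps_both
      (w 0 * gr A x0 0 + w 1 * gr A x0 1 + w 2 * gr A x0 2)
      (dotProduct w ((blk A).mulVec w))
      (w 0 * gr B x0 0 + w 1 * gr B x0 1 + w 2 * gr B x0 2)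
      (dotProduct w ((blk B).mulVec w)) hLa hLb
    apply hdisj
    refine ⟨fun i => x0 i + s * w i, ?_, ?_⟩
    · rw [quad_shift A hAs x0 w s, hQA0]
      linarith
    · rw [quad_shift B hBs x0 w s, hQB0]
      linarith
  obtain ⟨lam, hlam, hpar⟩ := hpar
  have hc0 : lam * (A.mulVec (hv x0)) 0 + (B.mulVec (hv x0)) 0 = 0 := by
    have h1 := congrFun hpar 0
    simp only [Pi.neg_apply, Pi.smul_apply, smul_eq_mul] at h1
    show lam * gr A x0 0 + gr B x0 0 = 0
    rw [h1]
    ring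
  have hc1 : lam * (A.mulVec (hv x0)) 1 + (B.mulVec (hv x0)) 1 = 0 := by
    have h1 := congrFun hpar 1
    simp only [Pi.neg_apply, Pi.smul_apply, smul_eq_mul] at h1
    show lam * gr A x0 1 + gr B x0 1 = 0
    rw [h1]
    ring
  have hc2 : lam * (A.mulVec (hv x0)) 2 + (B.mulVec (hv x0)) 2 = 0 := by
    have h1 := congrFun hpar 2
    simp only [Pi.neg_apply, Pi.smul_apply, smul_eq_mul] at h1
    show lam * gr A x0 2 + gr B x0 2 = 0
    rw [h1]
    ring
  have hA3 := quad_eq_dot A x0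
  have hB3 := quad_eq_dot B x0
  rw [hQA0] at hA3
  rw [hQB0] at hB3
  have hmv : ∀ j : Fin 4, ((lam • A + B).mulVec (hv x0)) j
      = lam * (A.mulVec (hv x0)) j + (B.mulVec (hv x0)) j := by
    intro j
    rw [Matrix.add_mulVec, Matrix.smul_mulVec]
    simp
  have hv0 : (lam • A + B).mulVec (hv x0) = 0 := by
    funext j
    fin_cases j
    · show ((lam • A + B).mulVec (hv x0)) 0 = 0
      rw [hmv 0]; exact hc0
    · show ((lam • A + B).mulVec (hv x0)) 1 = 0
      rw [hmv 1]; exact hc1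
    · show ((lam • A + B).mulVec (hv x0)) 2 = 0
      rw [hmv 2]; exact hc2
    · show ((lam • A + B).mulVec (hv x0)) 3 = 0
      rw [hmv 3]
      linear_combination (-lam) * hA3 - hB3 - x0 0 * hc0 - x0 1 * hc1 - x0 2 * hc2
  have hdet0 : (lam • A + B).det = 0 :=
    Matrix.exists_mulVec_eq_zero_iff.mp ⟨hv x0, hv_ne_zero x0, hv0⟩
  have hMs : (lam • A + B).IsSymm := symm_add_smul A B hAs hBs lam
  have hne : pencilPoly A B ≠ 0 := pencil_ne_zero A B hBdet
  refine ⟨lam, hlam, ?_, ?_⟩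
  · rw [pencil_eval]
    exact hdet0
  · rw [mult_iff A B lam hne]
    constructor
    · rw [pencil_coeff_zero]
      exact hdet0
    · rw [pencil_coeff_one A (lam • A + B) x0 hMs hv0, hQA0, zero_mul]

end EllipsoidAux

theorem ellipsoids_touch_externally_iff_positive_double_root
    (A B : Matrix (Fin 4) (Fin 4) ℝ)
    (hA : IsEllipsoidMatrix A) (hB : IsEllipsoidMatrix B) :
    ((¬ ∃ x : Fin 3 → ℝ, ellipsoidQuadForm A x < 0 ∧ ellipsoidQuadForm B x < 0) ∧
        (∃! x : Fin 3 → ℝ, ellipsoidQuadForm A x ≤ 0 ∧ ellipsoidQuadForm B x ≤ 0)) ↔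
      ∃ lam : ℝ, 0 < lam ∧ (pencilPoly A B).eval lam = 0 ∧
        2 ≤ (pencilPoly A B).rootMultiplicity lam := by
  constructor
  · rintro ⟨hdisj, huniq⟩
    exact EllipsoidAux.forward A B hA hB hdisj huniq.exists
  · rintro ⟨lam, hlam, he, hm⟩
    exact EllipsoidAux.backward A B hA hB lam hlam he hm
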